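/- Let M be a matroid on a finite ground set E, and let 𝓕 = (F_0, …, F_d) and 𝓕' = (F'_0, …, F'_{d'}) be flags of flats of M. Then 𝔠_{𝓕'} ⊆ 𝔠_𝓕 (as subsets of ℝ^E) if and only if {F'_0, …, F'_{d'}} ⊆ {F_0, …, F_d}. -/

import Mathlib

open scoped BigOperators

/-- The `0-1` indicator vector `e_F ∈ ℝ^E` of a subset `F ⊆ E`. -/
noncomputable def eVec {α : Type*} (F : Set α) : α → ℝ := F.indicator 1

/-- A flag of flats `∅ = F_0 ⊊ F_1 ⊊ ⋯ ⊊ F_d = E` of a matroid `M`. -/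
def IsFlag {α : Type*} (M : Matroid α) (d : ℕ) (𝓕 : Fin (d + 1) → Set α) : Prop :=
  (∀ j, M.IsFlat (𝓕 j)) ∧ StrictMono 𝓕 ∧ 𝓕 0 = ∅ ∧ 𝓕 (Fin.last d) = M.E

/-- The cone `𝔠_𝓕 = { Σ_j λ_j e_{F_j} : λ_j ≥ 0 for j = 1, …, d−1 }` of a flag. -/
def flagCone {α : Type*} (d : ℕ) (𝓕 : Fin (d + 1) → Set α) : Set (α → ℝ) :=
  { x | ∃ lam : Fin (d + 1) → ℝ,
      (∀ j : Fin (d + 1), (j : ℕ) ≠ 0 → (j : ℕ) ≠ d → 0 ≤ lam j) ∧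
      x = ∑ j, lam j • eVec (𝓕 j) }

open scoped Classical in
lemma eVec_apply {α : Type*} (S : Set α) (a : α) :
    eVec S a = if a ∈ S then 1 else 0 := by
  simp [eVec, Set.indicator_apply]

/-- Key lemma: if the indicator vector of a set `F` is a conical combination (with possibly
negative coefficients on the first and last term) of indicator vectors of a chain of sets
from `∅` to `univ`, then `F` belongs to the chain. -/
lemma key_lemma {α : Type*} [Fintype α] (d : ℕ) (𝓕 : Fin (d + 1) → Set α)
    (hmono : StrictMono 𝓕) (h0 : 𝓕 0 = ∅) (hlast : 𝓕 (Fin.last d) = Set.univ)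
    (F : Set α) (lam : Fin (d + 1) → ℝ)
    (hnn : ∀ j : Fin (d + 1), (j : ℕ) ≠ 0 → (j : ℕ) ≠ d → 0 ≤ lam j)
    (heq : eVec F = ∑ j, lam j • eVec (𝓕 j)) : F ∈ Set.range 𝓕 := by
  classical
  have hne : ∀ a : α, (Finset.univ.filter (fun i => a ∈ 𝓕 i)).Nonempty := fun a =>
    ⟨Fin.last d, by simp [hlast]⟩
  set idx : α → Fin (d + 1) := fun a => (Finset.univ.filter (fun i => a ∈ 𝓕 i)).min' (hne a)
    with hidx_def
  have hidx_mem : ∀ a, a ∈ 𝓕 (idx a) := by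
    intro a
    have := Finset.min'_mem _ (hne a)
    simpa [hidx_def] using this
  have hidx_le : ∀ a i, a ∈ 𝓕 i → idx a ≤ i := by
    intro a i hi
    exact Finset.min'_le _ _ (by simp [hi])
  have hmem_iff : ∀ a i, a ∈ 𝓕 i ↔ idx a ≤ i := by
    intro a i
    constructor
    · exact hidx_le a i
    · intro h; exact hmono.monotone h (hidx_mem a)
  have hidx0 : ∀ a, idx a ≠ 0 := by
    intro a h
    have := hidx_mem a
    rw [h, h0] at this
    exact this
  set g : Fin (d + 1) → ℝ := fun k => ∑ i ∈ Finset.univ.filter (fun i => k ≤ i), lam i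
    with hg_def
  have hval : ∀ a, eVec F a = g (idx a) := by
    intro a
    have h1 := congrFun heq a
    calc eVec F a = ∑ j, lam j * (if a ∈ 𝓕 j then 1 else 0) := by
          rw [h1]
          simp [eVec_apply]
      _ = ∑ j, (if idx a ≤ j then lam j else 0) := by
          refine Finset.sum_congr rfl fun j _ => ?_
          by_cases h : a ∈ 𝓕 j
          · rw [if_pos h, if_pos ((hmem_iff a j).mp h), mul_one]
          · rw [if_neg h, if_neg (fun hh => h ((hmem_iff a j).mpr hh)), mul_zero]
      _ = g (idx a) := (Finset.sum_filter _ _).symm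
  have hF01 : ∀ a, eVec F a = 0 ∨ eVec F a = 1 := by
    intro a
    rw [eVec_apply]
    split <;> simp
  have hsurj : ∀ k : Fin (d + 1), k ≠ 0 → ∃ a, idx a = k := by
    intro k hk
    have hkpos : 0 < (k : ℕ) := Nat.pos_of_ne_zero (fun h => hk (Fin.ext h))
    set p : Fin (d + 1) := ⟨(k : ℕ) - 1, by omega⟩ with hp_def
    have hpk : p < k := by
      rw [Fin.lt_def]
      show (k : ℕ) - 1 < k
      omega
    have hss : 𝓕 p ⊂ 𝓕 k := hmono hpk
    obtain ⟨a, hak, hap⟩ := Set.exists_of_ssubset hss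
    refine ⟨a, le_antisymm (hidx_le a k hak) ?_⟩
    by_contra h
    push_neg at h
    have hle : idx a ≤ p := by
      rw [Fin.le_def]
      rw [Fin.lt_def] at h
      simp [hp_def]
      omega
    exact hap (hmono.monotone hle (hidx_mem a))
  have hg_anti : ∀ k k' : Fin (d + 1), k ≠ 0 → k ≤ k' → g k' ≤ g k := by
    intro k k' hk hkk'
    have hsubf : Finset.univ.filter (fun i => k' ≤ i) ⊆ Finset.univ.filter (fun i => k ≤ i) := by
      intro i hi
      simp only [Finset.mem_filter, Finset.mem_univ, true_and] at hi ⊢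
      exact le_trans hkk' hi
    rw [hg_def]
    simp only
    rw [← Finset.sum_sdiff hsubf]
    have hnn2 : 0 ≤ ∑ i ∈ Finset.univ.filter (fun i => k ≤ i) \
        Finset.univ.filter (fun i => k' ≤ i), lam i := by
      refine Finset.sum_nonneg fun i hi => ?_
      simp only [Finset.mem_sdiff, Finset.mem_filter, Finset.mem_univ, true_and] at hi
      obtain ⟨hki, hik'⟩ := hi
      push_neg at hik'
      refine hnn i ?_ ?_
      · have := Fin.le_def.mp hki
        have hkpos : 0 < (k : ℕ) := Nat.pos_of_ne_zero (fun h => hk (Fin.ext h))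
        omega
      · have h1 := Fin.lt_def.mp hik'
        have h2 : (k' : ℕ) ≤ d := Fin.is_le k'
        omega
    linarith
  have hg01 : ∀ k : Fin (d + 1), k ≠ 0 → g k = 0 ∨ g k = 1 := by
    intro k hk
    obtain ⟨a, rfl⟩ := hsurj k hk
    rw [← hval a]
    exact hF01 a
  set T : Finset (Fin (d + 1)) := Finset.univ.filter (fun k => k ≠ 0 ∧ g k = 1) with hT_def
  by_cases hTne : T.Nonempty
  · have hk₀mem : T.max' hTne ∈ T := T.max'_mem hTne
    set k₀ := T.max' hTne with hk0_def
    obtain ⟨-, hk₀0, hgk₀⟩ := Finset.mem_filter.mp hk₀mem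
    refine ⟨k₀, ?_⟩
    ext a
    constructor
    · -- a ∈ 𝓕 k₀ → a ∈ F
      intro ha
      have hle : idx a ≤ k₀ := (hmem_iff a k₀).mp ha
      have h1 : g k₀ ≤ g (idx a) := hg_anti _ _ (hidx0 a) hle
      rw [hgk₀] at h1
      have h2 := hg01 (idx a) (hidx0 a)
      have h3 : g (idx a) = 1 := by rcases h2 with h | h <;> [linarith; exact h]
      have h4 : eVec F a = 1 := by rw [hval a, h3]
      rw [eVec_apply] at h4
      by_contra hna
      rw [if_neg hna] at h4
      norm_num at h4
    · intro ha
      have h4 : eVec F a = 1 := by rw [eVec_apply, if_pos ha]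
      have h5 : g (idx a) = 1 := by rw [← hval a, h4]
      have hmemT : idx a ∈ T :=
        Finset.mem_filter.mpr ⟨Finset.mem_univ _, hidx0 a, h5⟩
      have hle : idx a ≤ k₀ := T.le_max' _ hmemT
      exact (hmem_iff a k₀).mpr hle
  · refine ⟨0, ?_⟩
    rw [h0]
    ext a
    simp only [Set.mem_empty_iff_false, false_iff]
    intro ha
    have h4 : eVec F a = 1 := by rw [eVec_apply, if_pos ha]
    have h5 : g (idx a) = 1 := by rw [← hval a, h4]
    exact hTne ⟨idx a, Finset.mem_filter.mpr ⟨Finset.mem_univ _, hidx0 a, h5⟩⟩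

/-- For flags of flats `𝓕, 𝓕'` of a matroid on a finite ground set,
`𝔠_{𝓕'} ⊆ 𝔠_𝓕` if and only if `|𝓕'| ⊆ |𝓕|`. -/
theorem flagCone_subset_iff {α : Type*} [Fintype α] (M : Matroid α) (hE : M.E = Set.univ)
    (d d' : ℕ) (𝓕 : Fin (d + 1) → Set α) (𝓕' : Fin (d' + 1) → Set α)
    (h𝓕 : IsFlag M d 𝓕) (h𝓕' : IsFlag M d' 𝓕') :
    flagCone d' 𝓕' ⊆ flagCone d 𝓕 ↔ Set.range 𝓕' ⊆ Set.range 𝓕 := by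
  classical
  obtain ⟨-, hmono, h0, hlastE⟩ := h𝓕
  obtain ⟨-, hmono', h0', hlastE'⟩ := h𝓕'
  have hlast : 𝓕 (Fin.last d) = Set.univ := hlastE.trans hE
  have hlast' : 𝓕' (Fin.last d') = Set.univ := hlastE'.trans hE
  constructor
  · -- cone inclusion implies flag inclusion
    intro hc F hF
    obtain ⟨j, rfl⟩ := hF
    by_cases hj0 : (j : ℕ) = 0
    · have : j = 0 := Fin.ext hj0
      rw [this, h0', ← h0]
      exact ⟨0, rfl⟩
    by_cases hjd : (j : ℕ) = d'
    · have : j = Fin.last d' := Fin.ext (by simpa using hjd)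
      rw [this, hlast', ← hlast]
      exact ⟨Fin.last d, rfl⟩
    · -- middle flat: use the key lemma
      have hmem : eVec (𝓕' j) ∈ flagCone d' 𝓕' := by
        refine ⟨fun i => if i = j then 1 else 0, fun i _ _ => ?_, ?_⟩
        · by_cases h : i = j <;> simp [h]
        · simp only [ite_smul, one_smul, zero_smul]
          rw [Finset.sum_ite_eq' Finset.univ j (fun i => eVec (𝓕' i))]
          simp
      obtain ⟨lam, hnn, heq⟩ := hc hmem
      exact key_lemma d 𝓕 hmono h0 hlast (𝓕' j) lam hnn heq
  · -- flag inclusion implies cone inclusion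
    intro hsub x hx
    obtain ⟨lam', hnn', rfl⟩ := hx
    choose σ hσ using fun j => hsub (Set.mem_range_self j)
    refine ⟨fun i => ∑ j ∈ Finset.univ.filter (fun j => σ j = i), lam' j, ?_, ?_⟩
    · intro i hi0 hid
      refine Finset.sum_nonneg fun j hj => ?_
      simp only [Finset.mem_filter, Finset.mem_univ, true_and] at hj
      refine hnn' j (fun hj0 => ?_) (fun hjd => ?_)
      · have hj' : j = 0 := Fin.ext hj0
        have heq0 : 𝓕 i = 𝓕 0 := by rw [← hj, hσ, hj', h0', ← h0]
        exact hi0 (congrArg Fin.val (hmono.injective heq0))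
      · have hj' : j = Fin.last d' := Fin.ext (by simpa using hjd)
        have heqd : 𝓕 i = 𝓕 (Fin.last d) := by rw [← hj, hσ, hj', hlast', ← hlast]
        have := congrArg Fin.val (hmono.injective heqd)
        simp at this
        exact hid this
    · rw [← Finset.sum_fiberwise Finset.univ σ (fun j => lam' j • eVec (𝓕' j))]
      refine Finset.sum_congr rfl fun i _ => ?_
      rw [Finset.sum_smul]
      refine Finset.sum_congr rfl fun j hj => ?_
      simp only [Finset.mem_filter, Finset.mem_univ, true_and] at hj
      rw [← hσ j, hj]
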